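/- Let g : [a,b] → ℝ be monotonically increasing, G(t) = a + (b−a)(t+1)/2, and j ≥ 1 an integer. Then there exists x_0 ∈ [0, π] such that ∫_0^π g(G(cos θ)) cos(jθ) dθ = ((g(b) − g(a))/j) · sin(j x_0); in particular |∫_0^π g(G(cos θ)) cos(jθ) dθ| ≤ (g(b) − g(a))/j. -/

import Mathlib

open Real Set MeasureTheory

/-- Second mean value theorem applied to a monotone `g` composed with `G(cos θ)`:
there is `x₀ ∈ [0,π]` with `∫₀^π g(G(cos θ)) cos(jθ) dθ = ((g b - g a)/j) sin(j x₀)`;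
in particular the integral is bounded by `(g b - g a)/j`. -/
theorem integral_monotone_comp_cos_eq (a b : ℝ) (hab : a ≤ b) (g : ℝ → ℝ)
    (hg : MonotoneOn g (Icc a b)) (j : ℕ) (hj : 1 ≤ j) :
    ∃ x₀ ∈ Icc (0:ℝ) π,
      (∫ θ in (0:ℝ)..π, g (a + (b - a) / 2 * (cos θ + 1)) * cos (j * θ)) =
        ((g b - g a) / j) * sin (j * x₀) ∧
      |∫ θ in (0:ℝ)..π, g (a + (b - a) / 2 * (cos θ + 1)) * cos (j * θ)| ≤
        (g b - g a) / j := by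
  have hamem : a ∈ Icc a b := ⟨le_refl a, hab⟩
  have hbmem : b ∈ Icc a b := ⟨hab, le_refl b⟩
  set c : ℝ := g b - g a with hc_def
  have hc0 : 0 ≤ c := sub_nonneg.2 (hg hamem hbmem hab)
  have hjpos : (0:ℝ) < j := by exact_mod_cast hj
  have hjne : (j:ℝ) ≠ 0 := ne_of_gt hjpos
  -- the clamped version of `g`
  set g' : ℝ → ℝ := fun x => g (max a (min b x)) with hg'_def
  have hclampmem : ∀ x : ℝ, max a (min b x) ∈ Icc a b := fun x =>
    ⟨le_max_left _ _, max_le hab (min_le_left _ _)⟩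
  have hg'mono : Monotone g' := by
    intro x y hxy
    exact hg (hclampmem x) (hclampmem y)
      (max_le_max le_rfl (min_le_min le_rfl hxy))
  set u : ℝ → ℝ := fun θ => a + (b - a) / 2 * (cos θ + 1) with hu_def
  have hucont : Continuous u := by fun_prop
  have humem : ∀ θ : ℝ, u θ ∈ Icc a b := by
    intro θ
    have h1 := neg_one_le_cos θ
    have h2 := cos_le_one θ
    simp only [hu_def, mem_Icc]
    constructor <;> nlinarith
  set f : ℝ → ℝ := fun θ => g' (u θ) with hf_def
  have hfeq : ∀ θ, f θ = g (u θ) := by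
    intro θ
    have h := humem θ
    simp only [hf_def, hg'_def, min_eq_right h.2, max_eq_right h.1]
  have hfmeas : Measurable f := hg'mono.measurable.comp hucont.measurable
  have hf_anti : AntitoneOn f (Icc 0 π) := by
    intro x hx y hy hxy
    have hcos : cos y ≤ cos x := cos_le_cos_of_nonneg_of_le_pi hx.1 hy.2 hxy
    rw [hfeq x, hfeq y]
    exact hg (humem y) (humem x) (by simp only [hu_def]; nlinarith)
  have hub : ∀ θ, f θ ≤ g b := fun θ => by
    rw [hfeq]; exact hg (humem θ) hbmem (humem θ).2
  have hlb : ∀ θ, g a ≤ f θ := fun θ => by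
    rw [hfeq]; exact hg hamem (humem θ) (humem θ).1
  -- rewrite the goal integrand in terms of `f`
  have hkey : (fun θ => g (a + (b - a) / 2 * (cos θ + 1)) * cos ((j:ℝ) * θ)) =
      fun θ => f θ * cos ((j:ℝ) * θ) := by
    funext θ; rw [hfeq]
  rw [show (∫ θ in (0:ℝ)..π, g (a + (b - a) / 2 * (cos θ + 1)) * cos (j * θ)) =
      ∫ θ in (0:ℝ)..π, f θ * cos ((j:ℝ) * θ) from by rw [hkey]]
  -- basic integral of cos (j θ)
  have hcosint : ∀ t : ℝ, (∫ θ in (0:ℝ)..t, cos ((j:ℝ) * θ)) = sin ((j:ℝ) * t) / j := by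
    intro t
    have := intervalIntegral.integral_comp_mul_left (a := (0:ℝ)) (b := t)
      (fun x => cos x) hjne
    rw [this]
    simp [integral_cos]
    ring
  have hcospi : (∫ θ in (0:ℝ)..π, cos ((j:ℝ) * θ)) = 0 := by
    rw [hcosint, sin_nat_mul_pi]; simp
  -- integrability facts
  have hf_int : IntervalIntegrable f volume 0 π := by
    apply AntitoneOn.intervalIntegrable
    rwa [uIcc_of_le pi_pos.le]
  have hcos_cont : Continuous fun θ : ℝ => cos ((j:ℝ) * θ) := by fun_prop
  have hfcos_int : IntervalIntegrable (fun θ => f θ * cos ((j:ℝ) * θ)) volume 0 π :=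
    hf_int.mul_continuousOn hcos_cont.continuousOn
  set h : ℝ → ℝ := fun θ => f θ - g a with hh_def
  have hh0 : ∀ θ, 0 ≤ h θ := fun θ => sub_nonneg.2 (hlb θ)
  have hhc : ∀ θ, h θ ≤ c := fun θ => sub_le_sub_right (hub θ) _
  have hhmeas : Measurable h := hfmeas.sub measurable_const
  have hh_int : IntervalIntegrable (fun θ => h θ * cos ((j:ℝ) * θ)) volume 0 π :=
    (hf_int.sub (intervalIntegrable_const)).mul_continuousOn hcos_cont.continuousOn
  have hhanti : AntitoneOn h (Icc 0 π) := fun x hx y hy hxy =>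
    sub_le_sub_right (hf_anti hx hy hxy) _
  -- reduce integral to the one of h
  have hsplit : (∫ θ in (0:ℝ)..π, f θ * cos ((j:ℝ) * θ)) =
      ∫ θ in (0:ℝ)..π, h θ * cos ((j:ℝ) * θ) := by
    have : ∀ θ ∈ uIcc (0:ℝ) π, f θ * cos ((j:ℝ) * θ) =
        h θ * cos ((j:ℝ) * θ) + g a * cos ((j:ℝ) * θ) := by
      intro θ _; simp only [hh_def]; ring
    rw [intervalIntegral.integral_congr this,
      intervalIntegral.integral_add (g := fun θ => g a * cos ((j:ℝ) * θ)) hh_int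
        ((continuous_const.mul hcos_cont).intervalIntegrable _ _),
      intervalIntegral.integral_const_mul, hcospi]
    ring
  rw [hsplit]
  -- case c = 0
  rcases eq_or_lt_of_le hc0 with hc | hcpos
  · refine ⟨0, ⟨le_refl 0, pi_pos.le⟩, ?_, ?_⟩
    · have hh_eq : ∀ θ ∈ uIcc (0:ℝ) π, h θ * cos ((j:ℝ) * θ) = 0 := by
        intro θ _
        have h1 := hh0 θ; have h2 := hhc θ
        have : h θ = 0 := le_antisymm (by linarith) h1
        rw [this, zero_mul]
      rw [intervalIntegral.integral_congr hh_eq]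
      simp
    · have hh_eq : ∀ θ ∈ uIcc (0:ℝ) π, h θ * cos ((j:ℝ) * θ) = 0 := by
        intro θ _
        have h1 := hh0 θ; have h2 := hhc θ
        have : h θ = 0 := le_antisymm (by linarith) h1
        rw [this, zero_mul]
      rw [intervalIntegral.integral_congr hh_eq]
      simp
      positivity
  -- main case c > 0
  -- the kernel for the layer-cake / Fubini argument
  set K : ℝ → ℝ → ℝ := fun θ y => if y < h θ then cos ((j:ℝ) * θ) else 0 with hK_def
  set μ1 : Measure ℝ := volume.restrict (Ioc (0:ℝ) π) with hμ1
  set μ2 : Measure ℝ := volume.restrict (Ioc (0:ℝ) c) with hμ2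
  haveI : IsFiniteMeasure μ1 := by
    constructor
    rw [hμ1, Measure.restrict_apply_univ, Real.volume_Ioc]
    exact ENNReal.ofReal_lt_top
  haveI : IsFiniteMeasure μ2 := by
    constructor
    rw [hμ2, Measure.restrict_apply_univ, Real.volume_Ioc]
    exact ENNReal.ofReal_lt_top
  -- inner integral in y
  have inner1 : ∀ θ, (∫ y, K θ y ∂μ2) = h θ * cos ((j:ℝ) * θ) := by
    intro θ
    have hKy : (fun y => K θ y) =
        (Iio (h θ)).indicator (fun _ => cos ((j:ℝ) * θ)) := by
      funext y
      simp [hK_def, indicator_apply, mem_Iio]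
    rw [hμ2, hKy, setIntegral_indicator measurableSet_Iio]
    have hset : Ioc (0:ℝ) c ∩ Iio (h θ) = Ioo 0 (h θ) := by
      ext y
      simp only [mem_inter_iff, mem_Ioc, mem_Iio, mem_Ioo]
      constructor
      · rintro ⟨⟨h1, _⟩, h3⟩; exact ⟨h1, h3⟩
      · rintro ⟨h1, h2⟩; exact ⟨⟨h1, le_trans h2.le (hhc θ)⟩, h2⟩
    rw [hset, setIntegral_const, measureReal_def, Real.volume_Ioo, smul_eq_mul,
      ENNReal.toReal_ofReal (by simpa using hh0 θ)]
    ring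
  -- integrability on the product
  have hKmeas : Measurable (Function.uncurry K) := by
    have : Function.uncurry K =
        fun p : ℝ × ℝ => ({p : ℝ × ℝ | p.2 < h p.1}.indicator
          (fun p => cos ((j:ℝ) * p.1))) p := by
      funext p
      simp [Function.uncurry, hK_def, indicator_apply]
    rw [this]
    exact Measurable.indicator (by fun_prop)
      (measurableSet_lt measurable_snd (hhmeas.comp measurable_fst))
  have hKint : Integrable (Function.uncurry K) (μ1.prod μ2) := by
    refine Integrable.mono' (integrable_const 1) hKmeas.aestronglyMeasurable
      (Filter.Eventually.of_forall fun p => ?_)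
    simp only [Function.uncurry, hK_def]
    split_ifs
    · exact abs_cos_le_one _
    · simp
  have hswap : (∫ θ, (∫ y, K θ y ∂μ2) ∂μ1) = ∫ y, (∫ θ, K θ y ∂μ1) ∂μ2 :=
    integral_integral_swap hKint
  -- the sweep function T
  set T : ℝ → ℝ := fun y => sSup ({0} ∪ {θ ∈ Icc 0 π | y < h θ}) with hT_def
  have hTne : ∀ y : ℝ, ({0} ∪ {θ ∈ Icc 0 π | y < h θ} : Set ℝ).Nonempty :=
    fun y => ⟨0, Or.inl rfl⟩
  have hTbdd : ∀ y : ℝ, BddAbove ({0} ∪ {θ ∈ Icc 0 π | y < h θ} : Set ℝ) := by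
    intro y
    refine ⟨π, ?_⟩
    rintro θ (rfl | hθ)
    · exact pi_pos.le
    · exact hθ.1.2
  have hTmem : ∀ y, T y ∈ Icc (0:ℝ) π := by
    intro y
    constructor
    · exact le_csSup (hTbdd y) (Or.inl rfl)
    · refine csSup_le (hTne y) ?_
      rintro θ (rfl | hθ)
      · exact pi_pos.le
      · exact hθ.1.2
  have hTanti : Antitone T := by
    intro y1 y2 h12
    refine csSup_le_csSup (hTbdd y1) (hTne y2) ?_
    rintro θ (rfl | hθ)
    · exact Or.inl rfl
    · exact Or.inr ⟨hθ.1, lt_of_le_of_lt h12 hθ.2⟩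
  -- inner integral in θ
  have inner2 : ∀ y, (∫ θ, K θ y ∂μ1) = sin ((j:ℝ) * T y) / j := by
    intro y
    have hKy : (fun θ => K θ y) =
        ({θ : ℝ | y < h θ}).indicator (fun θ => cos ((j:ℝ) * θ)) := by
      funext θ
      simp [hK_def, indicator_apply]
    rw [hμ1, hKy, setIntegral_indicator (measurableSet_lt measurable_const hhmeas)]
    have hae : (Ioc (0:ℝ) π ∩ {θ : ℝ | y < h θ} : Set ℝ) =ᵐ[volume] (Ioc 0 (T y) : Set ℝ) := by
      have hsub1 : Ioc (0:ℝ) π ∩ {θ : ℝ | y < h θ} ⊆ Ioc 0 (T y) := by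
        rintro θ ⟨hθ1, hθ2⟩
        exact ⟨hθ1.1, le_csSup (hTbdd y) (Or.inr ⟨⟨hθ1.1.le, hθ1.2⟩, hθ2⟩)⟩
      have hsub2 : Ioc (0:ℝ) (T y) \ (Ioc (0:ℝ) π ∩ {θ : ℝ | y < h θ}) ⊆ {T y} := by
        rintro θ ⟨hθ1, hθ2⟩
        by_contra hne
        have hlt : θ < T y := lt_of_le_of_ne hθ1.2 (by simpa using hne)
        obtain ⟨θ', hθ', hθθ'⟩ := exists_lt_of_lt_csSup (hTne y) hlt
        rcases hθ' with rfl | hθ'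
        · exact absurd hθθ' (not_lt.2 hθ1.1.le)
        · have hθIcc : θ ∈ Icc (0:ℝ) π := ⟨hθ1.1.le, hθ1.2.trans (hTmem y).2⟩
          have : h θ' ≤ h θ := hhanti hθIcc hθ'.1 hθθ'.le
          exact hθ2 ⟨⟨hθ1.1, hθIcc.2⟩, lt_of_lt_of_le hθ'.2 this⟩
      refine (MeasureTheory.ae_eq_set).2 ⟨?_, ?_⟩
      · exact measure_mono_null (fun x hx => (hx.2 (hsub1 hx.1)).elim) measure_empty
      · exact measure_mono_null hsub2 (measure_singleton _)
    rw [setIntegral_congr_set hae, ← intervalIntegral.integral_of_le (hTmem y).1,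
      hcosint]
  -- put everything together
  have hmain : (∫ θ in (0:ℝ)..π, h θ * cos ((j:ℝ) * θ)) =
      (∫ y in Ioc (0:ℝ) c, sin ((j:ℝ) * T y)) / j := by
    rw [intervalIntegral.integral_of_le pi_pos.le]
    calc (∫ θ in Ioc (0:ℝ) π, h θ * cos ((j:ℝ) * θ))
        = ∫ θ, (∫ y, K θ y ∂μ2) ∂μ1 := by
          rw [hμ1]
          exact (integral_congr_ae (Filter.Eventually.of_forall
            fun θ => (inner1 θ))).symm
      _ = ∫ y, (∫ θ, K θ y ∂μ1) ∂μ2 := hswap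
      _ = ∫ y, sin ((j:ℝ) * T y) / j ∂μ2 :=
          integral_congr_ae (Filter.Eventually.of_forall fun y => inner2 y)
      _ = (∫ y in Ioc (0:ℝ) c, sin ((j:ℝ) * T y)) / j := by
          rw [hμ2, integral_div]
  set S : ℝ := ∫ y in Ioc (0:ℝ) c, sin ((j:ℝ) * T y) with hS_def
  have hSmeas : AEStronglyMeasurable (fun y => sin ((j:ℝ) * T y))
      (volume.restrict (Ioc (0:ℝ) c)) :=
    (Real.continuous_sin.measurable.comp
      ((measurable_const.mul hTanti.measurable))).aestronglyMeasurable
  have hSle : |S| ≤ c := by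
    have := norm_setIntegral_le_of_norm_le_const (μ := volume)
      (s := Ioc (0:ℝ) c) (f := fun y => sin ((j:ℝ) * T y)) (C := 1)
      (by rw [Real.volume_Ioc]; exact ENNReal.ofReal_lt_top)
      (fun y _ => by rw [Real.norm_eq_abs]; exact abs_sin_le_one _)
    rw [Real.norm_eq_abs, measureReal_def, Real.volume_Ioc, ENNReal.toReal_ofReal (by linarith)] at this
    linarith
  -- choose x₀
  set r : ℝ := S / c with hr_def
  have hr1 : -1 ≤ r := by
    rw [hr_def, le_div_iff₀ hcpos]
    have := neg_abs_le S
    linarith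
  have hr2 : r ≤ 1 := by
    rw [hr_def, div_le_one hcpos]
    have := le_abs_self S
    linarith
  have hSr : S = c * r := by rw [hr_def, mul_div_cancel₀ _ (ne_of_gt hcpos)]
  have habs : |∫ θ in (0:ℝ)..π, h θ * cos ((j:ℝ) * θ)| ≤ c / j := by
    rw [hmain, abs_div, abs_of_pos hjpos]
    gcongr
  rcases Nat.lt_or_ge j 2 with h2 | h2
  · -- j = 1
    have hj1 : j = 1 := by omega
    subst hj1
    have hS0 : 0 ≤ S := by
      refine setIntegral_nonneg measurableSet_Ioc fun y _ => ?_
      have := hTmem y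
      refine sin_nonneg_of_nonneg_of_le_pi ?_ ?_
      · simpa using this.1
      · simpa using this.2
    have hr0 : 0 ≤ r := div_nonneg hS0 hcpos.le
    refine ⟨arcsin r, ⟨arcsin_nonneg.2 hr0,
      (arcsin_le_pi_div_two r).trans (by linarith [pi_pos])⟩, ?_, ?_⟩
    · rw [hmain, hSr]
      simp [sin_arcsin hr1 hr2]
    · exact habs
  · -- j ≥ 2
    have hj2 : (2:ℝ) ≤ (j:ℝ) := by exact_mod_cast h2
    have ha1 := arcsin_le_pi_div_two r
    have ha2 := neg_pi_div_two_le_arcsin r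
    have hpi := pi_pos
    refine ⟨(π - arcsin r) / j, ⟨div_nonneg (by linarith) hjpos.le, ?_⟩, ?_, ?_⟩
    · rw [div_le_iff₀ hjpos]
      nlinarith
    · have hsin : sin ((j:ℝ) * ((π - arcsin r) / j)) = r := by
        rw [mul_div_cancel₀ _ hjne, sin_pi_sub, sin_arcsin hr1 hr2]
      rw [hmain, hSr, hsin]
      ring
    · exact habs
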